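/- (Bounded finite model property) If the sequent A ⊢ B is not provable in IDFNL, then there is a Došen model with a finite set of states — of cardinality at most 2^{|Φ|}, where Φ is the closure of {A, B} — in which A ⊢ B is not valid. -/

import Mathlib

/-- Formulas of the language L₁. `ldiv A B` is A∖B, `rdiv B A` is B/A,
`ildiv A B` is A∖∖B (iterative left division), `irdiv B A` is B//A. -/
inductive Fm : Type where
  | var : ℕ → Fm
  | top : Fm
  | bot : Fm
  | and : Fm → Fm → Fm
  | or : Fm → Fm → Fm
  | prod : Fm → Fm → Fm
  | ldiv : Fm → Fm → Fm
  | rdiv : Fm → Fm → Fm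
  | ildiv : Fm → Fm → Fm
  | irdiv : Fm → Fm → Fm

/-- A Došen model on the set of states `S`: a ternary relation and a valuation. -/
structure DosenModel (S : Type*) where
  R : S → S → S → Prop
  V : ℕ → Set S

/-- `Rleft R x̄ s t` is the relation R⃖x̄ s t for a path x̄ (nonempty list). -/
def Rleft {S : Type*} (R : S → S → S → Prop) : List S → S → S → Prop
  | [], _, _ => False
  | [x], s, t => R x s t
  | x :: y :: xs, s, t => ∃ z, R x s z ∧ Rleft R (y :: xs) z t

/-- `Rright R s x̄ t` is the relation R s x̄⃗ t for a path x̄ (nonempty list). -/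
def Rright {S : Type*} (R : S → S → S → Prop) : S → List S → S → Prop
  | _, [], _ => False
  | s, [x], t => R s x t
  | s, x :: y :: xs, t => ∃ z, R s x z ∧ Rright R z (y :: xs) t

/-- Satisfaction: `sat M A s` means s ⊨ A in the model M. -/
def sat {S : Type*} (M : DosenModel S) : Fm → S → Prop
  | .var p, s => s ∈ M.V p
  | .top, _ => True
  | .bot, _ => False
  | .and A B, s => sat M A s ∧ sat M B s
  | .or A B, s => sat M A s ∨ sat M B s
  | .prod A B, s => ∃ t u, M.R t u s ∧ sat M A t ∧ sat M B u
  | .ldiv A B, s => ∀ t u, M.R t s u → sat M A t → sat M B u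
  | .rdiv B A, s => ∀ t u, M.R s t u → sat M A t → sat M B u
  | .ildiv A B, s =>
      ∀ (xs : List S) (t : S), xs ≠ [] → Rleft M.R xs s t → (∀ x ∈ xs, sat M A x) → sat M B t
  | .irdiv B A, s =>
      ∀ (xs : List S) (t : S), xs ≠ [] → Rright M.R s xs t → (∀ x ∈ xs, sat M A x) → sat M B t

/-- Validity of the sequent A ⊢ B in a model. -/
def valid {S : Type*} (M : DosenModel S) (A B : Fm) : Prop :=
  ∀ s, sat M A s → sat M B s

/-- `ldivN A B n` is A∖ⁿB (meaningful for n ≥ 1): A∖¹B = A∖B, A∖ⁿ⁺¹B = A∖(A∖ⁿB). -/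
def ldivN (A B : Fm) : ℕ → Fm
  | 0 => B
  | n + 1 => .ldiv A (ldivN A B n)

/-- `rdivN B A n` is B/ⁿA (meaningful for n ≥ 1): B/¹A = B/A, B/ⁿ⁺¹A = (B/ⁿA)/A. -/
def rdivN (B A : Fm) : ℕ → Fm
  | 0 => B
  | n + 1 => .rdiv (rdivN B A n) A

/-- `RIter R n` is the relation Rⁿ⁺¹ of the paper: R¹ = R,
R^{n+1} s t u iff ∃ x y, R s y u ∧ Rⁿ x t y. -/
def RIter {S : Type*} (R : S → S → S → Prop) : ℕ → S → S → S → Prop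
  | 0, s, t, u => R s t u
  | n + 1, s, t, u => ∃ x y, R s y u ∧ RIter R n x t y

/-- The left transitive closure R⁺ˡ = ⋃_{n ≥ 1} Rⁿ. -/
def RplusL {S : Type*} (R : S → S → S → Prop) (s t u : S) : Prop :=
  ∃ n, RIter R n s t u

/-- Provability in the axiom system IDFNL. `Prov A B` means A ⟶ B. -/
inductive Prov : Fm → Fm → Prop
  | id (A : Fm) : Prov A A
  | top (A : Fm) : Prov A .top
  | bot (A : Fm) : Prov .bot A
  | andE1 (A B : Fm) : Prov (A.and B) A
  | andE2 (A B : Fm) : Prov (A.and B) B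
  | orI1 (A B : Fm) : Prov A (A.or B)
  | orI2 (A B : Fm) : Prov B (A.or B)
  | distrib (A B C : Fm) : Prov (A.and (B.or C)) ((A.and B).or (A.and C))
  | ildivAnd (A B C : Fm) : Prov ((A.ildiv B).and (A.ildiv C)) (A.ildiv (B.and C))
  | ildivUnfold (A B : Fm) : Prov (A.ildiv B) ((A.ldiv B).and (A.ldiv (A.ildiv B)))
  | ildivFold (A B : Fm) : Prov ((A.ldiv B).and (A.ldiv (A.ildiv B))) (A.ildiv B)
  | irdivAnd (A B C : Fm) : Prov ((B.irdiv A).and (C.irdiv A)) ((B.and C).irdiv A)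
  | irdivUnfold (A B : Fm) : Prov (B.irdiv A) ((B.rdiv A).and ((B.irdiv A).rdiv A))
  | irdivFold (A B : Fm) : Prov (((B.irdiv A).rdiv A).and (B.rdiv A)) (B.irdiv A)
  | resL1 {A B C : Fm} : Prov (A.prod B) C → Prov B (A.ldiv C)
  | resL2 {A B C : Fm} : Prov B (A.ldiv C) → Prov (A.prod B) C
  | resR1 {A B C : Fm} : Prov (A.prod B) C → Prov A (C.rdiv B)
  | resR2 {A B C : Fm} : Prov A (C.rdiv B) → Prov (A.prod B) C
  | andI {A B C : Fm} : Prov A B → Prov A C → Prov A (B.and C)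
  | orE {A B C : Fm} : Prov A C → Prov B C → Prov (A.or B) C
  | cut {A B C : Fm} : Prov A B → Prov B C → Prov A C
  | ildivMono {A B C D : Fm} : Prov A B → Prov C D → Prov (B.ildiv C) (A.ildiv D)
  | irdivMono {A B C D : Fm} : Prov A B → Prov C D → Prov (C.irdiv B) (D.irdiv A)
  | ildivInd {A B : Fm} : Prov A (B.ldiv A) → Prov A (B.ildiv A)
  | irdivInd {A B : Fm} : Prov A (A.rdiv B) → Prov A (A.irdiv B)

/-- Conjunction of a finite list of formulas (⋀∅ = ⊤). -/
def bigAnd : List Fm → Fm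
  | [] => .top
  | A :: As => A.and (bigAnd As)

/-- Disjunction of a finite list of formulas (⋁∅ = ⊥). -/
def bigOr : List Fm → Fm
  | [] => .bot
  | A :: As => A.or (bigOr As)

/-- An independent IDFNL-pair: no finite Γ′ ⊆ Γ, Δ′ ⊆ Δ with ⋀Γ′ ⟶ ⋁Δ′. -/
def IndepPair (Γ Δ : Set Fm) : Prop :=
  ¬ ∃ (γ δ : List Fm), (∀ A ∈ γ, A ∈ Γ) ∧ (∀ A ∈ δ, A ∈ Δ) ∧ Prov (bigAnd γ) (bigOr δ)

/-- A prime IDFNL-theory. -/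
def PrimeTheory (T : Set Fm) : Prop :=
  (∀ A B, A ∈ T → B ∈ T → A.and B ∈ T) ∧
  (∀ A B, A ∈ T → Prov A B → B ∈ T) ∧
  (∀ A B, A.or B ∈ T → A ∈ T ∨ B ∈ T)

/-- Membership in the closure of a set of formulas Φ′: the smallest set
containing Φ′, ⊤, ⊥, closed under subformulas, and such that
A∖∖B ∈ Φ implies A∖B ∈ Φ and B//A ∈ Φ implies B/A ∈ Φ. -/
inductive Closure (Φ : Set Fm) : Fm → Prop
  | base {A : Fm} : A ∈ Φ → Closure Φ A
  | top : Closure Φ .top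
  | bot : Closure Φ .bot
  | andL {A B : Fm} : Closure Φ (A.and B) → Closure Φ A
  | andR {A B : Fm} : Closure Φ (A.and B) → Closure Φ B
  | orL {A B : Fm} : Closure Φ (A.or B) → Closure Φ A
  | orR {A B : Fm} : Closure Φ (A.or B) → Closure Φ B
  | prodL {A B : Fm} : Closure Φ (A.prod B) → Closure Φ A
  | prodR {A B : Fm} : Closure Φ (A.prod B) → Closure Φ B
  | ldivL {A B : Fm} : Closure Φ (A.ldiv B) → Closure Φ A
  | ldivR {A B : Fm} : Closure Φ (A.ldiv B) → Closure Φ B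
  | rdivL {A B : Fm} : Closure Φ (A.rdiv B) → Closure Φ A
  | rdivR {A B : Fm} : Closure Φ (A.rdiv B) → Closure Φ B
  | ildivL {A B : Fm} : Closure Φ (A.ildiv B) → Closure Φ A
  | ildivR {A B : Fm} : Closure Φ (A.ildiv B) → Closure Φ B
  | irdivL {A B : Fm} : Closure Φ (A.irdiv B) → Closure Φ A
  | irdivR {A B : Fm} : Closure Φ (A.irdiv B) → Closure Φ B
  | ildivDiv {A B : Fm} : Closure Φ (A.ildiv B) → Closure Φ (A.ldiv B)
  | irdivDiv {A B : Fm} : Closure Φ (B.irdiv A) → Closure Φ (B.rdiv A)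

/-- A set of formulas is closed iff it equals its own closure. -/
def ClosedSet (Φ : Set Fm) : Prop := {A | Closure Φ A} = Φ

/-- `entails Γ A`: ⋀Γ′ ⟶ A for some finite Γ′ ⊆ Γ. -/
def entails (Γ : Set Fm) (A : Fm) : Prop :=
  ∃ γ : List Fm, (∀ X ∈ γ, X ∈ Γ) ∧ Prov (bigAnd γ) A

/-- States of the canonical model over a (finite closed) set Φ:
independent IDFNL-pairs (a_in, a_out) with a_in ∪ a_out = Φ. -/
def CanState (Φ : Set Fm) : Type :=
  {a : Set Fm × Set Fm // IndepPair a.1 a.2 ∧ a.1 ∪ a.2 = Φ}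

/-- The canonical accessibility relation. -/
def canR (Φ : Set Fm) (a b c : CanState Φ) : Prop :=
  ∀ A B : Fm, A ∈ Φ → B ∈ Φ → entails a.1.1 A → entails b.1.1 (A.ldiv B) → entails c.1.1 B

/-- The canonical model M_Φ. -/
def canModel (Φ : Set Fm) : DosenModel (CanState Φ) :=
  ⟨canR Φ, fun p => {a | Fm.var p ∈ Φ ∧ Fm.var p ∈ a.1.1}⟩

section ProvLemmas
open Prov

theorem prodMonoL {A A' B : Fm} (h : Prov A A') : Prov (A.prod B) (A'.prod B) :=
  resR2 (cut h (resR1 (Prov.id _)))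
theorem prodMonoR {A B B' : Fm} (h : Prov B B') : Prov (A.prod B) (A.prod B') :=
  resL2 (cut h (resL1 (Prov.id _)))
theorem prodMono2 {A A' B B' : Fm} (h1 : Prov A A') (h2 : Prov B B') :
    Prov (A.prod B) (A'.prod B') := cut (prodMonoL h1) (prodMonoR h2)
theorem prodBotL {B C : Fm} : Prov (Fm.bot.prod B) C := resR2 (bot _)
theorem prodBotR {A C : Fm} : Prov (A.prod Fm.bot) C := resL2 (bot _)
theorem prodOrL {A B C : Fm} : Prov ((A.or B).prod C) ((A.prod C).or (B.prod C)) :=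
  resR2 (orE (resR1 (cut (Prov.id _) (orI1 _ _))) (resR1 (cut (Prov.id _) (orI2 _ _))))
theorem prodOrR {A B C : Fm} : Prov (A.prod (B.or C)) ((A.prod B).or (A.prod C)) :=
  resL2 (orE (resL1 (cut (Prov.id _) (orI1 _ _))) (resL1 (cut (Prov.id _) (orI2 _ _))))
theorem ldivApp {A B : Fm} : Prov (A.prod (A.ldiv B)) B := resL2 (Prov.id _)
theorem rdivApp {A B : Fm} : Prov ((B.rdiv A).prod A) B := resR2 (Prov.id _)
theorem ldivMonoNum {A C D : Fm} (h : Prov C D) : Prov (A.ldiv C) (A.ldiv D) :=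
  resL1 (cut ldivApp h)
theorem ldivAnti {A A' C : Fm} (h : Prov A' A) : Prov (A.ldiv C) (A'.ldiv C) :=
  resL1 (cut (prodMonoL h) ldivApp)
theorem rdivMonoNum {A C D : Fm} (h : Prov C D) : Prov (C.rdiv A) (D.rdiv A) :=
  resR1 (cut rdivApp h)
theorem rdivAnti {A A' C : Fm} (h : Prov A' A) : Prov (C.rdiv A) (C.rdiv A') :=
  resR1 (cut (prodMonoR h) rdivApp)
theorem ldivOrDen {A B C : Fm} : Prov ((A.ldiv C).and (B.ldiv C)) ((A.or B).ldiv C) :=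
  resL1 (cut prodOrL (orE (cut (prodMonoR (andE1 _ _)) ldivApp)
    (cut (prodMonoR (andE2 _ _)) ldivApp)))
theorem rdivOrDen {A B C : Fm} : Prov ((C.rdiv A).and (C.rdiv B)) (C.rdiv (A.or B)) :=
  resR1 (cut prodOrR (orE (cut (prodMonoL (andE1 _ _)) rdivApp)
    (cut (prodMonoL (andE2 _ _)) rdivApp)))
theorem ldivAndNum {A C D : Fm} : Prov ((A.ldiv C).and (A.ldiv D)) (A.ldiv (C.and D)) :=
  resL1 (andI (cut (prodMonoR (andE1 _ _)) ldivApp) (cut (prodMonoR (andE2 _ _)) ldivApp))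
theorem ldivPairAnd {X Y U V : Fm} :
    Prov ((X.ldiv Y).and (U.ldiv V)) ((X.and U).ldiv (Y.and V)) :=
  resL1 (andI (cut (prodMono2 (andE1 _ _) (andE1 _ _)) ldivApp)
    (cut (prodMono2 (andE2 _ _) (andE2 _ _)) ldivApp))
theorem andMonoR {X Y Y' : Fm} (h : Prov Y Y') : Prov (X.and Y) (X.and Y') :=
  andI (andE1 _ _) (cut (andE2 _ _) h)

theorem andElem {γ : List Fm} {C : Fm} (h : C ∈ γ) : Prov (bigAnd γ) C := by
  induction γ with
  | nil => cases h
  | cons D γ ih =>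
    rcases List.mem_cons.mp h with h | h
    · subst h; exact andE1 _ _
    · exact cut (andE2 _ _) (ih h)
theorem andIntro {γ : List Fm} {Z : Fm} (h : ∀ X ∈ γ, Prov Z X) : Prov Z (bigAnd γ) := by
  induction γ with
  | nil => exact top _
  | cons D γ ih =>
    exact andI (h D (List.mem_cons_self)) (ih fun X hX => h X (List.mem_cons_of_mem _ hX))
theorem andSub {γ₁ γ₂ : List Fm} (h : ∀ X ∈ γ₁, X ∈ γ₂) :
    Prov (bigAnd γ₂) (bigAnd γ₁) := andIntro fun X hX => andElem (h X hX)
theorem orElem {δ : List Fm} {C : Fm} (h : C ∈ δ) : Prov C (bigOr δ) := by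
  induction δ with
  | nil => cases h
  | cons D δ ih =>
    rcases List.mem_cons.mp h with h | h
    · subst h; exact orI1 _ _
    · exact cut (ih h) (orI2 _ _)
theorem orElim {δ : List Fm} {Z : Fm} (h : ∀ X ∈ δ, Prov X Z) : Prov (bigOr δ) Z := by
  induction δ with
  | nil => exact bot _
  | cons D δ ih =>
    exact orE (h D (List.mem_cons_self)) (ih fun X hX => h X (List.mem_cons_of_mem _ hX))
theorem orSub {δ₁ δ₂ : List Fm} (h : ∀ X ∈ δ₁, X ∈ δ₂) :
    Prov (bigOr δ₁) (bigOr δ₂) := orElim fun X hX => orElem (h X hX)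

theorem listLdiv : ∀ l : List (Fm × Fm),
    Prov (bigAnd (l.map fun p => p.1.ldiv p.2))
      ((bigAnd (l.map Prod.fst)).ldiv (bigAnd (l.map Prod.snd)))
  | [] => resL1 (top _)
  | p :: l => cut (andMonoR (listLdiv l)) ldivPairAnd

theorem ildivCoind {X A B : Fm} (hB : Prov X (A.ldiv B)) (hX : Prov X (A.ldiv X)) :
    Prov X (A.ildiv B) := by
  have hAX : Prov (A.prod X) X := resL2 hX
  have h3 : Prov (A.prod X) (A.ildiv B) :=
    cut (ildivInd (resL1 (prodMonoR hAX))) (ildivMono (Prov.id A) (resL2 hB))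
  exact cut (andI hB (resL1 h3)) (ildivFold A B)

theorem irdivCoind {X A B : Fm} (hB : Prov X (B.rdiv A)) (hX : Prov X (X.rdiv A)) :
    Prov X (B.irdiv A) := by
  have hXA : Prov (X.prod A) X := resR2 hX
  have h3 : Prov (X.prod A) (B.irdiv A) :=
    cut (irdivInd (resR1 (prodMonoL hXA))) (irdivMono (Prov.id A) (resR2 hB))
  exact cut (andI (resR1 h3) hB) (irdivFold A B)

theorem entMember {Γ : Set Fm} {C : Fm} (h : C ∈ Γ) : entails Γ C :=
  ⟨[C], by simpa using h, andE1 _ _⟩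
theorem entProv {Γ : Set Fm} {F G : Fm} (h : entails Γ F) (hp : Prov F G) : entails Γ G :=
  ⟨h.choose, h.choose_spec.1, cut h.choose_spec.2 hp⟩
theorem entConj {Γ : Set Fm} {F G : Fm} (h1 : entails Γ F) (h2 : entails Γ G) :
    entails Γ (F.and G) := by
  obtain ⟨γ₁, hγ₁, hp₁⟩ := h1
  obtain ⟨γ₂, hγ₂, hp₂⟩ := h2
  refine ⟨γ₁ ++ γ₂, ?_, Prov.andI (cut (andSub ?_) hp₁) (cut (andSub ?_) hp₂)⟩
  · intro X hX; rcases List.mem_append.mp hX with h | h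
    · exact hγ₁ X h
    · exact hγ₂ X h
  · intro X hX; exact List.mem_append_left _ hX
  · intro X hX; exact List.mem_append_right _ hX

end ProvLemmas
section PairExt
attribute [local instance] Classical.propDecidable

theorem indepMono {Γ Δ Γ' Δ' : Set Fm} (h : IndepPair Γ Δ) (h1 : Γ' ⊆ Γ) (h2 : Δ' ⊆ Δ) :
    IndepPair Γ' Δ' := fun ⟨γ, δ, hγ, hδ, hp⟩ =>
  h ⟨γ, δ, fun X hX => h1 (hγ X hX), fun X hX => h2 (hδ X hX), hp⟩

theorem primeStep (Γ Δ : Set Fm) (C : Fm) (h : IndepPair Γ Δ) :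
    IndepPair (insert C Γ) Δ ∨ IndepPair Γ (insert C Δ) := by
  by_contra hcon
  push_neg at hcon
  obtain ⟨h1, h2⟩ := hcon
  rw [IndepPair, not_not] at h1 h2
  obtain ⟨γ₁, δ₁, hγ₁, hδ₁, hp₁⟩ := h1
  obtain ⟨γ₂, δ₂, hγ₂, hδ₂, hp₂⟩ := h2
  set γ₁f : List Fm := γ₁.filter (fun X => X ∈ Γ) with hγ₁f
  set δ₂f : List Fm := δ₂.filter (fun X => X ∈ Δ) with hδ₂f
  have hmem1 : ∀ X ∈ γ₁f, X ∈ Γ := by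
    intro X hX; have := List.mem_filter.mp hX; exact of_decide_eq_true this.2
  have hmem2 : ∀ X ∈ δ₂f, X ∈ Δ := by
    intro X hX; have := List.mem_filter.mp hX; exact of_decide_eq_true this.2
  have hc1 : Prov (bigAnd (C :: γ₁f)) (bigAnd γ₁) := by
    apply andIntro
    intro X hX
    rcases hγ₁ X hX with h | h
    · subst h; exact andElem (List.mem_cons_self)
    · exact andElem (List.mem_cons_of_mem _ (List.mem_filter.mpr ⟨hX, decide_eq_true h⟩))
  have hc2 : Prov (bigOr δ₂) (bigOr (C :: δ₂f)) := by
    apply orElim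
    intro X hX
    rcases hδ₂ X hX with h | h
    · subst h; exact orElem (List.mem_cons_self)
    · exact orElem (List.mem_cons_of_mem _ (List.mem_filter.mpr ⟨hX, decide_eq_true h⟩))
  apply h
  refine ⟨γ₁f ++ γ₂, δ₁ ++ δ₂f, ?_, ?_, ?_⟩
  · intro X hX; rcases List.mem_append.mp hX with h | h
    · exact hmem1 X h
    · exact hγ₂ X h
  · intro X hX; rcases List.mem_append.mp hX with h | h
    · exact hδ₁ X h
    · exact hmem2 X h
  · have step1 : Prov (bigAnd (γ₁f ++ γ₂)) ((bigAnd γ₁f).and (bigOr (C :: δ₂f))) :=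
      Prov.andI (andSub fun X hX => List.mem_append_left _ hX)
        (Prov.cut (andSub fun X hX => List.mem_append_right _ hX) (Prov.cut hp₂ hc2))
    have step2 : Prov ((bigAnd γ₁f).and (bigOr (C :: δ₂f)))
        (((bigAnd γ₁f).and C).or ((bigAnd γ₁f).and (bigOr δ₂f))) := Prov.distrib _ _ _
    have br1 : Prov ((bigAnd γ₁f).and C) (bigOr (δ₁ ++ δ₂f)) := by
      have : Prov ((bigAnd γ₁f).and C) (bigAnd (C :: γ₁f)) :=
        Prov.andI (Prov.andE2 _ _) (Prov.andE1 _ _)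
      exact Prov.cut this (Prov.cut hc1 (Prov.cut hp₁
        (orSub fun X hX => List.mem_append_left _ hX)))
    have br2 : Prov ((bigAnd γ₁f).and (bigOr δ₂f)) (bigOr (δ₁ ++ δ₂f)) :=
      Prov.cut (Prov.andE2 _ _) (orSub fun X hX => List.mem_append_right _ hX)
    exact Prov.cut step1 (Prov.cut step2 (Prov.orE br1 br2))

theorem extendPair {Γ Δ : Set Fm} (h : IndepPair Γ Δ) (s : Finset Fm) :
    ∃ Γ' Δ' : Set Fm, Γ ⊆ Γ' ∧ Δ ⊆ Δ' ∧ IndepPair Γ' Δ' ∧ (∀ C ∈ s, C ∈ Γ' ∨ C ∈ Δ') := by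
  induction s using Finset.induction_on with
  | empty => exact ⟨Γ, Δ, subset_rfl, subset_rfl, h, by simp⟩
  | @insert C s _ ih =>
    obtain ⟨Γ', Δ', hΓ, hΔ, hind, hcov⟩ := ih
    rcases primeStep Γ' Δ' C hind with h' | h'
    · refine ⟨insert C Γ', Δ', hΓ.trans (Set.subset_insert _ _), hΔ, h', ?_⟩
      intro D hD
      rcases Finset.mem_insert.mp hD with h | h
      · exact Or.inl (by simp [h])
      · rcases hcov D h with h | h
        · exact Or.inl (Set.mem_insert_of_mem _ h)
        · exact Or.inr h
    · refine ⟨Γ', insert C Δ', hΓ, hΔ.trans (Set.subset_insert _ _), h', ?_⟩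
      intro D hD
      rcases Finset.mem_insert.mp hD with h | h
      · exact Or.inr (by simp [h])
      · rcases hcov D h with h | h
        · exact Or.inl h
        · exact Or.inr (Set.mem_insert_of_mem _ h)

/-- Build a canonical state from an independent pair covering Φ. -/
def toState (Φ : Set Fm) (Γ' Δ' : Set Fm) (hind : IndepPair Γ' Δ')
    (hcov : ∀ C ∈ Φ, C ∈ Γ' ∨ C ∈ Δ') : CanState Φ :=
  ⟨(Γ' ∩ Φ, Δ' ∩ Φ), indepMono hind Set.inter_subset_left Set.inter_subset_left, by
    ext C
    constructor
    · rintro (⟨_, h⟩ | ⟨_, h⟩) <;> exact h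
    · intro hC
      rcases hcov C hC with h | h
      · exact Or.inl ⟨h, hC⟩
      · exact Or.inr ⟨h, hC⟩⟩

theorem toState_fst (Φ Γ' Δ' : Set Fm) (hind hcov) :
    (toState Φ Γ' Δ' hind hcov).1.1 = Γ' ∩ Φ := rfl
theorem toState_snd (Φ Γ' Δ' : Set Fm) (hind hcov) :
    (toState Φ Γ' Δ' hind hcov).1.2 = Δ' ∩ Φ := rfl

theorem stateDisjoint {Φ : Set Fm} (a : CanState Φ) {C : Fm} (h1 : C ∈ a.1.1)
    (h2 : C ∈ a.1.2) : False :=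
  a.2.1 ⟨[C], [C], by simpa using h1, by simpa using h2,
    Prov.cut (Prov.andE1 _ _) (Prov.orI1 _ _)⟩

theorem stateUnion {Φ : Set Fm} (a : CanState Φ) {C : Fm} (h : C ∈ Φ) :
    C ∈ a.1.1 ∨ C ∈ a.1.2 := by
  have := a.2.2
  rw [Set.ext_iff] at this
  exact (this C).mpr h

theorem stateSub1 {Φ : Set Fm} (a : CanState Φ) : a.1.1 ⊆ Φ := by
  intro C hC; rw [← a.2.2]; exact Or.inl hC
theorem stateSub2 {Φ : Set Fm} (a : CanState Φ) : a.1.2 ⊆ Φ := by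
  intro C hC; rw [← a.2.2]; exact Or.inr hC

/-- Truth-preserving key fact: within Φ, entailment from a⁺ coincides with membership. -/
theorem memOfEnt {Φ : Set Fm} (a : CanState Φ) {C : Fm} (hC : C ∈ Φ)
    (h : entails a.1.1 C) : C ∈ a.1.1 := by
  by_contra hn
  have hC2 : C ∈ a.1.2 := (stateUnion a hC).resolve_left hn
  obtain ⟨γ, hγ, hp⟩ := h
  exact a.2.1 ⟨γ, [C], hγ, by simpa using hC2, Prov.cut hp (Prov.orI1 _ _)⟩

theorem entOfMem {Φ : Set Fm} (a : CanState Φ) {C : Fm} (h : C ∈ a.1.1) :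
    entails a.1.1 C := entMember h

end PairExt
section Witness

theorem entBigAnd {Γ : Set Fm} {L : List Fm} (h : ∀ F ∈ L, entails Γ F) :
    entails Γ (bigAnd L) := by
  induction L with
  | nil => exact ⟨[], by simp, Prov.top _⟩
  | cons F L ih =>
    exact entConj (h F (List.mem_cons_self)) (ih fun G hG => h G (List.mem_cons_of_mem _ hG))

theorem extractPairs {γ : List Fm} {P : Fm → Fm → Prop} (h : ∀ Y ∈ γ, ∃ X, P X Y) :
    ∃ l : List (Fm × Fm), l.map Prod.snd = γ ∧ ∀ p ∈ l, P p.1 p.2 := by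
  induction γ with
  | nil => exact ⟨[], rfl, by simp⟩
  | cons Y γ ih =>
    obtain ⟨X, hX⟩ := h Y (List.mem_cons_self)
    obtain ⟨l, hl, hP⟩ := ih fun Z hZ => h Z (List.mem_cons_of_mem _ hZ)
    refine ⟨(X, Y) :: l, by simp [hl], ?_⟩
    intro p hp
    rcases List.mem_cons.mp hp with h | h
    · subst h; exact hX
    · exact hP p h

theorem ldivOrList {Γ : Set Fm} {T : Fm} : ∀ {δ : List Fm},
    (∀ F ∈ δ, entails Γ (F.ldiv T)) → entails Γ ((bigOr δ).ldiv T) := by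
  intro δ
  induction δ with
  | nil => exact fun _ => ⟨[], by simp, Prov.resL1 prodBotL⟩
  | cons F δ ih =>
    intro h
    exact entProv (entConj (h F (List.mem_cons_self))
      (ih fun G hG => h G (List.mem_cons_of_mem _ hG))) ldivOrDen

theorem rdivOrList {Γ : Set Fm} {T : Fm} : ∀ {δ : List Fm},
    (∀ F ∈ δ, entails Γ (T.rdiv F)) → entails Γ (T.rdiv (bigOr δ)) := by
  intro δ
  induction δ with
  | nil => exact fun _ => ⟨[], by simp, Prov.resR1 prodBotR⟩
  | cons F δ ih =>
    intro h
    exact entProv (entConj (h F (List.mem_cons_self))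
      (ih fun G hG => h G (List.mem_cons_of_mem _ hG))) rdivOrDen

variable {Φ : Set Fm} {s : Finset Fm}

/-- Generalized witness construction for left division. -/
theorem GLdiv (hs : ∀ C, C ∈ Φ ↔ C ∈ s) (a : CanState Φ) (X₀ : Fm) (hX₀ : X₀ ∈ Φ) (T : Fm)
    (h : ¬ ∃ γ : List Fm, (∀ X ∈ γ, X ∈ a.1.1) ∧ Prov (X₀.prod (bigAnd γ)) T) :
    ∃ t u : CanState Φ, canR Φ t a u ∧ X₀ ∈ t.1.1 ∧
      ¬ ∃ δ : List Fm, (∀ X ∈ δ, X ∈ u.1.1) ∧ Prov (bigAnd δ) T := by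
  set Δt' : Set Fm := {F | entails a.1.1 (F.ldiv T)} with hΔt'
  have hind1 : IndepPair {X₀} Δt' := by
    rintro ⟨γ, δ, hγ, hδ, hp⟩
    have h1 : Prov X₀ (bigAnd γ) := andIntro fun X hX => by
      rw [Set.mem_singleton_iff.mp (hγ X hX)]; exact Prov.id _
    have h2 : entails a.1.1 ((bigOr δ).ldiv T) := ldivOrList fun F hF => hδ F hF
    have h3 : entails a.1.1 (X₀.ldiv T) := entProv h2 (ldivAnti (Prov.cut h1 hp))
    obtain ⟨γa, hγa, hpa⟩ := h3
    exact h ⟨γa, hγa, Prov.cut (prodMonoR hpa) ldivApp⟩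
  obtain ⟨Γt, Δt, hΓt, hΔt, hindt, hcovt⟩ := extendPair hind1 s
  have hcovt' : ∀ C ∈ Φ, C ∈ Γt ∨ C ∈ Δt := fun C hC => hcovt C ((hs C).mp hC)
  set t : CanState Φ := toState Φ Γt Δt hindt hcovt' with ht
  set Γu' : Set Fm := {Y | Y ∈ Φ ∧ ∃ X, X ∈ Φ ∧ entails t.1.1 X ∧ entails a.1.1 (X.ldiv Y)}
    with hΓu'
  have hind2 : IndepPair Γu' {T} := by
    rintro ⟨γ, δ, hγ, hδ, hp⟩
    have hδT : Prov (bigOr δ) T := orElim fun X hX => by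
      rw [Set.mem_singleton_iff.mp (hδ X hX)]; exact Prov.id _
    have hp' : Prov (bigAnd γ) T := Prov.cut hp hδT
    obtain ⟨l, hl, hP⟩ := extractPairs (P := fun X Y =>
      entails t.1.1 X ∧ entails a.1.1 (X.ldiv Y)) (fun Y hY => (hγ Y hY).2.imp fun X hX =>
        ⟨hX.2.1, hX.2.2⟩)
    set X : Fm := bigAnd (l.map Prod.fst) with hX
    have hXt : entails t.1.1 X := entBigAnd (by
      intro F hF
      obtain ⟨p, hpmem, rfl⟩ := List.mem_map.mp hF
      exact (hP p hpmem).1)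
    have hXa : entails a.1.1 (X.ldiv T) := by
      have h4 : entails a.1.1 (bigAnd (l.map fun p => p.1.ldiv p.2)) := entBigAnd (by
        intro F hF
        obtain ⟨p, hpmem, rfl⟩ := List.mem_map.mp hF
        exact (hP p hpmem).2)
      have h5 := entProv h4 (listLdiv l)
      rw [hl] at h5
      exact entProv h5 (ldivMonoNum hp')
    have hXΔ : X ∈ Δt := hΔt hXa
    obtain ⟨γX, hγX, hpX⟩ := hXt
    exact hindt ⟨γX, [X], fun Z hZ => ((hγX Z hZ).1 : Z ∈ Γt), by simpa using hXΔ,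
      Prov.cut hpX (Prov.orI1 _ _)⟩
  obtain ⟨Γu, Δu, hΓu, hΔu, hindu, hcovu⟩ := extendPair hind2 s
  have hcovu' : ∀ C ∈ Φ, C ∈ Γu ∨ C ∈ Δu := fun C hC => hcovu C ((hs C).mp hC)
  set u : CanState Φ := toState Φ Γu Δu hindu hcovu' with hu
  refine ⟨t, u, ?_, ⟨hΓt rfl, hX₀⟩, ?_⟩
  · intro X Y hXΦ hYΦ hentT hentA
    have : Y ∈ Γu' := ⟨hYΦ, X, hXΦ, hentT, hentA⟩
    exact entMember (⟨hΓu this, hYΦ⟩ : Y ∈ Γu ∩ Φ)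
  · rintro ⟨δ, hδ, hp⟩
    exact hindu ⟨δ, [T], fun Z hZ => ((hδ Z hZ).1 : Z ∈ Γu), by simp [hΔu rfl],
      Prov.cut hp (Prov.orI1 _ _)⟩

/-- Generalized witness construction for right division. -/
theorem GRdiv (hs : ∀ C, C ∈ Φ ↔ C ∈ s) (a : CanState Φ) (X₀ : Fm) (hX₀ : X₀ ∈ Φ) (T : Fm)
    (h : ¬ ∃ γ : List Fm, (∀ X ∈ γ, X ∈ a.1.1) ∧ Prov ((bigAnd γ).prod X₀) T) :
    ∃ t u : CanState Φ, canR Φ a t u ∧ X₀ ∈ t.1.1 ∧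
      ¬ ∃ δ : List Fm, (∀ X ∈ δ, X ∈ u.1.1) ∧ Prov (bigAnd δ) T := by
  set Δt' : Set Fm := {F | entails a.1.1 (T.rdiv F)} with hΔt'
  have hind1 : IndepPair {X₀} Δt' := by
    rintro ⟨γ, δ, hγ, hδ, hp⟩
    have h1 : Prov X₀ (bigAnd γ) := andIntro fun X hX => by
      rw [Set.mem_singleton_iff.mp (hγ X hX)]; exact Prov.id _
    have h2 : entails a.1.1 (T.rdiv (bigOr δ)) := rdivOrList fun F hF => hδ F hF
    have h3 : entails a.1.1 (T.rdiv X₀) := entProv h2 (rdivAnti (Prov.cut h1 hp))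
    obtain ⟨γa, hγa, hpa⟩ := h3
    exact h ⟨γa, hγa, Prov.cut (prodMonoL hpa) rdivApp⟩
  obtain ⟨Γt, Δt, hΓt, hΔt, hindt, hcovt⟩ := extendPair hind1 s
  have hcovt' : ∀ C ∈ Φ, C ∈ Γt ∨ C ∈ Δt := fun C hC => hcovt C ((hs C).mp hC)
  set t : CanState Φ := toState Φ Γt Δt hindt hcovt' with ht
  set Γu' : Set Fm := {Y | Y ∈ Φ ∧ ∃ X, X ∈ Φ ∧ entails a.1.1 X ∧ entails t.1.1 (X.ldiv Y)}
    with hΓu'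
  have hind2 : IndepPair Γu' {T} := by
    rintro ⟨γ, δ, hγ, hδ, hp⟩
    have hδT : Prov (bigOr δ) T := orElim fun X hX => by
      rw [Set.mem_singleton_iff.mp (hδ X hX)]; exact Prov.id _
    have hp' : Prov (bigAnd γ) T := Prov.cut hp hδT
    obtain ⟨l, hl, hP⟩ := extractPairs (P := fun X Y =>
      entails a.1.1 X ∧ entails t.1.1 (X.ldiv Y)) (fun Y hY => (hγ Y hY).2.imp fun X hX =>
        ⟨hX.2.1, hX.2.2⟩)
    set F : Fm := bigAnd (l.map fun p => p.1.ldiv p.2) with hF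
    have hFt : entails t.1.1 F := entBigAnd (by
      intro G hG
      obtain ⟨p, hpmem, rfl⟩ := List.mem_map.mp hG
      exact (hP p hpmem).2)
    have hXa : entails a.1.1 (bigAnd (l.map Prod.fst)) := entBigAnd (by
      intro G hG
      obtain ⟨p, hpmem, rfl⟩ := List.mem_map.mp hG
      exact (hP p hpmem).1)
    obtain ⟨γa, hγa, hpa⟩ := hXa
    have hFΔ : F ∈ Δt := by
      apply hΔt
      refine ⟨γa, hγa, Prov.resR1 ?_⟩
      have step : Prov ((bigAnd γa).prod F)
          ((bigAnd (l.map Prod.fst)).prod ((bigAnd (l.map Prod.fst)).ldiv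
            (bigAnd (l.map Prod.snd)))) := prodMono2 hpa (listLdiv l)
      refine Prov.cut step (Prov.cut ldivApp ?_)
      rw [hl]; exact hp'
    obtain ⟨γF, hγF, hpF⟩ := hFt
    exact hindt ⟨γF, [F], fun Z hZ => ((hγF Z hZ).1 : Z ∈ Γt), by simpa using hFΔ,
      Prov.cut hpF (Prov.orI1 _ _)⟩
  obtain ⟨Γu, Δu, hΓu, hΔu, hindu, hcovu⟩ := extendPair hind2 s
  have hcovu' : ∀ C ∈ Φ, C ∈ Γu ∨ C ∈ Δu := fun C hC => hcovu C ((hs C).mp hC)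
  set u : CanState Φ := toState Φ Γu Δu hindu hcovu' with hu
  refine ⟨t, u, ?_, ⟨hΓt rfl, hX₀⟩, ?_⟩
  · intro X Y hXΦ hYΦ hentA hentT
    have : Y ∈ Γu' := ⟨hYΦ, X, hXΦ, hentA, hentT⟩
    exact entMember (⟨hΓu this, hYΦ⟩ : Y ∈ Γu ∩ Φ)
  · rintro ⟨δ, hδ, hp⟩
    exact hindu ⟨δ, [T], fun Z hZ => ((hδ Z hZ).1 : Z ∈ Γu), by simp [hΔu rfl],
      Prov.cut hp (Prov.orI1 _ _)⟩

end Witness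
section ProdWitness
attribute [local instance] Classical.propDecidable

theorem combineOrL {B : Fm} {Δ : Set Fm} : ∀ {δ' : List Fm},
    (∀ F ∈ δ', ∃ δ : List Fm, (∀ X ∈ δ, X ∈ Δ) ∧ Prov (F.prod B) (bigOr δ)) →
    ∃ δc : List Fm, (∀ X ∈ δc, X ∈ Δ) ∧ Prov ((bigOr δ').prod B) (bigOr δc) := by
  intro δ'
  induction δ' with
  | nil => exact fun _ => ⟨[], by simp, prodBotL⟩
  | cons F δ' ih =>
    intro h
    obtain ⟨δ₁, hδ₁, hp₁⟩ := h F (List.mem_cons_self)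
    obtain ⟨δ₂, hδ₂, hp₂⟩ := ih fun G hG => h G (List.mem_cons_of_mem _ hG)
    refine ⟨δ₁ ++ δ₂, ?_, ?_⟩
    · intro X hX; rcases List.mem_append.mp hX with h | h
      · exact hδ₁ X h
      · exact hδ₂ X h
    · exact Prov.cut prodOrL (Prov.orE
        (Prov.cut hp₁ (orSub fun X hX => List.mem_append_left _ hX))
        (Prov.cut hp₂ (orSub fun X hX => List.mem_append_right _ hX)))

theorem combineOrR {Γ Δ : Set Fm} : ∀ {δ' : List Fm},
    (∀ G ∈ δ', ∃ γ δ : List Fm, (∀ X ∈ γ, X ∈ Γ) ∧ (∀ X ∈ δ, X ∈ Δ) ∧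
      Prov ((bigAnd γ).prod G) (bigOr δ)) →
    ∃ γ δc : List Fm, (∀ X ∈ γ, X ∈ Γ) ∧ (∀ X ∈ δc, X ∈ Δ) ∧
      Prov ((bigAnd γ).prod (bigOr δ')) (bigOr δc) := by
  intro δ'
  induction δ' with
  | nil => exact fun _ => ⟨[], [], by simp, by simp, prodBotR⟩
  | cons G δ' ih =>
    intro h
    obtain ⟨γ₁, δ₁, hγ₁, hδ₁, hp₁⟩ := h G (List.mem_cons_self)
    obtain ⟨γ₂, δ₂, hγ₂, hδ₂, hp₂⟩ := ih fun G' hG' => h G' (List.mem_cons_of_mem _ hG')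
    refine ⟨γ₁ ++ γ₂, δ₁ ++ δ₂, ?_, ?_, ?_⟩
    · intro X hX; rcases List.mem_append.mp hX with h | h
      · exact hγ₁ X h
      · exact hγ₂ X h
    · intro X hX; rcases List.mem_append.mp hX with h | h
      · exact hδ₁ X h
      · exact hδ₂ X h
    · refine Prov.cut prodOrR (Prov.orE ?_ ?_)
      · exact Prov.cut (prodMonoL (andSub fun X hX => List.mem_append_left _ hX))
          (Prov.cut hp₁ (orSub fun X hX => List.mem_append_left _ hX))
      · exact Prov.cut (prodMonoL (andSub fun X hX => List.mem_append_right _ hX))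
          (Prov.cut hp₂ (orSub fun X hX => List.mem_append_right _ hX))

variable {Φ : Set Fm} {s : Finset Fm}

theorem prodWitness (hs : ∀ C, C ∈ Φ ↔ C ∈ s) (c : CanState Φ) (A B : Fm)
    (hA : A ∈ Φ) (hB : B ∈ Φ) (hmem : (A.prod B) ∈ c.1.1) :
    ∃ a b : CanState Φ, canR Φ a b c ∧ A ∈ a.1.1 ∧ B ∈ b.1.1 := by
  have hABΦ : (A.prod B) ∈ Φ := stateSub1 c hmem
  set Δa' : Set Fm := {F | ∃ δ : List Fm, (∀ X ∈ δ, X ∈ c.1.2) ∧ Prov (F.prod B) (bigOr δ)}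
    with hΔa'
  have hind1 : IndepPair {A} Δa' := by
    rintro ⟨γ, δ', hγ, hδ', hp⟩
    have h1 : Prov A (bigOr δ') := Prov.cut (andIntro fun X hX => by
      rw [Set.mem_singleton_iff.mp (hγ X hX)]; exact Prov.id _) hp
    obtain ⟨δc, hδc, hpc⟩ := combineOrL fun F hF => hδ' F hF
    have h2 : Prov (A.prod B) (bigOr δc) := Prov.cut (prodMonoL h1) hpc
    exact c.2.1 ⟨[A.prod B], δc, by simpa using hmem, hδc,
      Prov.cut (Prov.andE1 _ _) h2⟩
  obtain ⟨Γa, Δa, hΓa, hΔa, hinda, hcova⟩ := extendPair hind1 s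
  have hcova' : ∀ C ∈ Φ, C ∈ Γa ∨ C ∈ Δa := fun C hC => hcova C ((hs C).mp hC)
  set a : CanState Φ := toState Φ Γa Δa hinda hcova' with ha
  set Δb' : Set Fm := {G | ∃ γ δ : List Fm, (∀ X ∈ γ, X ∈ Γa) ∧ (∀ X ∈ δ, X ∈ c.1.2) ∧
    Prov ((bigAnd γ).prod G) (bigOr δ)} with hΔb'
  have hind2 : IndepPair {B} Δb' := by
    rintro ⟨γ, δ', hγ, hδ', hp⟩
    have h1 : Prov B (bigOr δ') := Prov.cut (andIntro fun X hX => by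
      rw [Set.mem_singleton_iff.mp (hγ X hX)]; exact Prov.id _) hp
    obtain ⟨γ', δc, hγ', hδc, hpc⟩ := combineOrR fun G hG => hδ' G hG
    have h2 : Prov ((bigAnd γ').prod B) (bigOr δc) := Prov.cut (prodMonoR h1) hpc
    have hmem' : bigAnd γ' ∈ Δa' := ⟨δc, hδc, h2⟩
    exact hinda ⟨γ', [bigAnd γ'], hγ', by simpa using hΔa hmem', Prov.orI1 _ _⟩
  obtain ⟨Γb, Δb, hΓb, hΔb, hindb, hcovb⟩ := extendPair hind2 s
  have hcovb' : ∀ C ∈ Φ, C ∈ Γb ∨ C ∈ Δb := fun C hC => hcovb C ((hs C).mp hC)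
  set b : CanState Φ := toState Φ Γb Δb hindb hcovb' with hb
  refine ⟨a, b, ?_, ⟨hΓa rfl, hA⟩, ⟨hΓb rfl, hB⟩⟩
  · intro X Y hXΦ hYΦ h1 h2
    obtain ⟨γ₁, hγ₁, hp₁⟩ := h1
    obtain ⟨γ₂, hγ₂, hp₂⟩ := h2
    by_contra hn
    have hY2 : Y ∈ c.1.2 := by
      rcases stateUnion c hYΦ with h | h
      · exact absurd (entOfMem c h) hn
      · exact h
    have h3 : Prov ((bigAnd γ₁).prod (bigAnd γ₂)) Y :=
      Prov.cut (prodMono2 hp₁ hp₂) ldivApp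
    have hmem' : bigAnd γ₂ ∈ Δb' := ⟨γ₁, [Y], fun X hX => ((hγ₁ X hX).1 : X ∈ Γa),
      by simpa using hY2, Prov.cut h3 (Prov.orI1 _ _)⟩
    exact hindb ⟨γ₂, [bigAnd γ₂], fun X hX => ((hγ₂ X hX).1 : X ∈ Γb),
      by simpa using hΔb hmem', Prov.orI1 _ _⟩

end ProdWitness
section Chi
attribute [local instance] Classical.propDecidable

variable {Φ : Set Fm} {s : Finset Fm}

noncomputable def chiL (s : Finset Fm) (a : CanState Φ) : List Fm :=
  s.toList.filter (fun C => decide (C ∈ a.1.1))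

noncomputable def chi (s : Finset Fm) (a : CanState Φ) : Fm := bigAnd (chiL s a)

theorem chiL_mem (hs : ∀ C, C ∈ Φ ↔ C ∈ s) {a : CanState Φ} {C : Fm} :
    C ∈ chiL s a ↔ C ∈ a.1.1 := by
  unfold chiL
  rw [List.mem_filter]
  constructor
  · intro h; exact of_decide_eq_true h.2
  · intro h
    exact ⟨Finset.mem_toList.mpr ((hs C).mp (stateSub1 a h)), decide_eq_true h⟩

theorem chiElem (hs : ∀ C, C ∈ Φ ↔ C ∈ s) {a : CanState Φ} {C : Fm} (h : C ∈ a.1.1) :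
    Prov (chi s a) C := andElem ((chiL_mem hs).mpr h)

theorem chiAnd (hs : ∀ C, C ∈ Φ ↔ C ∈ s) {a : CanState Φ} {γ : List Fm}
    (hγ : ∀ X ∈ γ, X ∈ a.1.1) : Prov (chi s a) (bigAnd γ) :=
  andIntro fun X hX => chiElem hs (hγ X hX)

theorem entOfChi (hs : ∀ C, C ∈ Φ ↔ C ∈ s) {a : CanState Φ} {F : Fm}
    (h : Prov (chi s a) F) : entails a.1.1 F :=
  ⟨chiL s a, fun X hX => (chiL_mem hs).mp hX, h⟩

theorem state_snd_eq (a : CanState Φ) : a.1.2 = Φ \ a.1.1 := by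
  ext C
  constructor
  · intro hC; exact ⟨stateSub2 a hC, fun h1 => stateDisjoint a h1 hC⟩
  · rintro ⟨hΦ, hn⟩; exact (stateUnion a hΦ).resolve_left hn

theorem state_eq_of_fst {a b : CanState Φ} (h : a.1.1 = b.1.1) : a = b := by
  apply Subtype.ext
  apply Prod.ext h
  rw [state_snd_eq, state_snd_eq, h]

theorem finiteCanState (hs : ∀ C, C ∈ Φ ↔ C ∈ s) : Finite (CanState Φ) := by
  have hinj : Function.Injective
      (fun (a : CanState Φ) (x : {C // C ∈ s}) => (↑x ∈ a.1.1 : Prop)) := by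
    intro a b hab
    apply state_eq_of_fst
    ext C
    constructor
    · intro hC
      have hCs : C ∈ s := (hs C).mp (stateSub1 a hC)
      have h2 : (C ∈ a.1.1) = (C ∈ b.1.1) := congrFun hab ⟨C, hCs⟩
      exact h2 ▸ hC
    · intro hC
      have hCs : C ∈ s := (hs C).mp (stateSub1 b hC)
      have h2 : (C ∈ a.1.1) = (C ∈ b.1.1) := congrFun hab ⟨C, hCs⟩
      exact h2.symm ▸ hC
  exact Finite.of_injective _ hinj

end Chi
section Truth
attribute [local instance] Classical.propDecidable

variable (Φ' : Set Fm) {s : Finset Fm}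

theorem truthLdiv (hs : ∀ C, C ∈ {C | Closure Φ' C} ↔ C ∈ s) {X Y : Fm}
    (hXY : Closure Φ' (X.ldiv Y))
    (ihX : ∀ a : CanState {C | Closure Φ' C}, sat (canModel _) X a ↔ X ∈ a.1.1)
    (ihY : ∀ a : CanState {C | Closure Φ' C}, sat (canModel _) Y a ↔ Y ∈ a.1.1) :
    ∀ a : CanState {C | Closure Φ' C},
      sat (canModel {C | Closure Φ' C}) (X.ldiv Y) a ↔ (X.ldiv Y) ∈ a.1.1 := by
  intro a
  have hXΦ : Closure Φ' X := Closure.ldivL hXY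
  have hYΦ : Closure Φ' Y := Closure.ldivR hXY
  constructor
  · intro hsat
    by_contra hn
    have hne : ¬ entails a.1.1 (X.ldiv Y) := fun he => hn (memOfEnt a hXY he)
    have h : ¬ ∃ γ : List Fm, (∀ Z ∈ γ, Z ∈ a.1.1) ∧ Prov (X.prod (bigAnd γ)) Y := by
      rintro ⟨γ, hγ, hp⟩
      exact hne ⟨γ, hγ, Prov.resL1 hp⟩
    obtain ⟨t, u, hR, hXt, hu⟩ := GLdiv hs a X hXΦ Y h
    have hYu : sat (canModel _) Y u := hsat t u hR ((ihX t).mpr hXt)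
    exact hu ⟨[Y], by simpa using (ihY u).mp hYu, Prov.andE1 _ _⟩
  · intro hmem t u hR hXt
    exact (ihY u).mpr (memOfEnt u hYΦ
      (hR X Y hXΦ hYΦ (entOfMem t ((ihX t).mp hXt)) (entOfMem a hmem)))

theorem truthRdiv (hs : ∀ C, C ∈ {C | Closure Φ' C} ↔ C ∈ s) {X Y : Fm}
    (hXY : Closure Φ' (Y.rdiv X))
    (ihX : ∀ a : CanState {C | Closure Φ' C}, sat (canModel _) X a ↔ X ∈ a.1.1)
    (ihY : ∀ a : CanState {C | Closure Φ' C}, sat (canModel _) Y a ↔ Y ∈ a.1.1) :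
    ∀ a : CanState {C | Closure Φ' C},
      sat (canModel {C | Closure Φ' C}) (Y.rdiv X) a ↔ (Y.rdiv X) ∈ a.1.1 := by
  intro a
  have hXΦ : Closure Φ' X := Closure.rdivR hXY
  have hYΦ : Closure Φ' Y := Closure.rdivL hXY
  constructor
  · intro hsat
    by_contra hn
    have hne : ¬ entails a.1.1 (Y.rdiv X) := fun he => hn (memOfEnt a hXY he)
    have h : ¬ ∃ γ : List Fm, (∀ Z ∈ γ, Z ∈ a.1.1) ∧ Prov ((bigAnd γ).prod X) Y := by
      rintro ⟨γ, hγ, hp⟩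
      exact hne ⟨γ, hγ, Prov.resR1 hp⟩
    obtain ⟨t, u, hR, hXt, hu⟩ := GRdiv hs a X hXΦ Y h
    have hYu : sat (canModel _) Y u := hsat t u hR ((ihX t).mpr hXt)
    exact hu ⟨[Y], by simpa using (ihY u).mp hYu, Prov.andE1 _ _⟩
  · intro hmem t u hR hXt
    exact (ihY u).mpr (memOfEnt u hYΦ
      (hR (Y.rdiv X) Y hXY hYΦ (entOfMem a hmem)
        (entProv (entOfMem t ((ihX t).mp hXt)) (Prov.resL1 rdivApp))))

theorem truthLemma (hs : ∀ C, C ∈ {C | Closure Φ' C} ↔ C ∈ s) :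
    ∀ C : Fm, Closure Φ' C → ∀ a : CanState {C | Closure Φ' C},
      sat (canModel {C | Closure Φ' C}) C a ↔ C ∈ a.1.1 := by
  intro C
  induction C with
  | var p =>
    intro hC a
    constructor
    · intro hsat; exact hsat.2
    · intro h; exact ⟨hC, h⟩
  | top =>
    intro hC a
    constructor
    · intro _; exact memOfEnt a Closure.top ⟨[], by simp, Prov.id _⟩
    · intro _; trivial
  | bot =>
    intro hC a
    constructor
    · intro hsat; exact hsat.elim
    · intro h
      exact (a.2.1 ⟨[Fm.bot], [], by simpa using h, by simp, Prov.andE1 _ _⟩).elim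
  | and X Y ihX ihY =>
    intro hC a
    have ihX' := ihX (Closure.andL hC)
    have ihY' := ihY (Closure.andR hC)
    constructor
    · rintro ⟨h1, h2⟩
      exact memOfEnt a hC (entConj (entOfMem a ((ihX' a).mp h1))
        (entOfMem a ((ihY' a).mp h2)))
    · intro h
      exact ⟨(ihX' a).mpr (memOfEnt a (Closure.andL hC)
          (entProv (entOfMem a h) (Prov.andE1 _ _))),
        (ihY' a).mpr (memOfEnt a (Closure.andR hC)
          (entProv (entOfMem a h) (Prov.andE2 _ _)))⟩
  | or X Y ihX ihY =>
    intro hC a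
    have ihX' := ihX (Closure.orL hC)
    have ihY' := ihY (Closure.orR hC)
    constructor
    · rintro (h | h)
      · exact memOfEnt a hC (entProv (entOfMem a ((ihX' a).mp h)) (Prov.orI1 _ _))
      · exact memOfEnt a hC (entProv (entOfMem a ((ihY' a).mp h)) (Prov.orI2 _ _))
    · intro h
      have hprime : X ∈ a.1.1 ∨ Y ∈ a.1.1 := by
        by_contra hcon
        push_neg at hcon
        have hX2 : X ∈ a.1.2 := (stateUnion a (Closure.orL hC)).resolve_left hcon.1
        have hY2 : Y ∈ a.1.2 := (stateUnion a (Closure.orR hC)).resolve_left hcon.2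
        refine a.2.1 ⟨[X.or Y], [X, Y], by simpa using h, ?_, ?_⟩
        · intro Z hZ
          rcases List.mem_cons.mp hZ with h' | h'
          · rw [h']; exact hX2
          · rw [List.mem_singleton.mp h']; exact hY2
        · exact Prov.cut (Prov.andE1 _ _)
            (Prov.orE (Prov.orI1 _ _) (Prov.cut (Prov.orI1 _ _) (Prov.orI2 _ _)))
      rcases hprime with h' | h'
      · exact Or.inl ((ihX' a).mpr h')
      · exact Or.inr ((ihY' a).mpr h')
  | prod X Y ihX ihY =>
    intro hC a
    have hXΦ := Closure.prodL hC
    have hYΦ := Closure.prodR hC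
    have ihX' := ihX hXΦ
    have ihY' := ihY hYΦ
    constructor
    · rintro ⟨t, u, hR, hXt, hYu⟩
      refine memOfEnt a hC (hR X (X.prod Y) hXΦ hC (entOfMem t ((ihX' t).mp hXt)) ?_)
      exact entProv (entOfMem u ((ihY' u).mp hYu)) (Prov.resL1 (Prov.id _))
    · intro hmem
      obtain ⟨t, u, hR, hXt, hYu⟩ := prodWitness hs a X Y hXΦ hYΦ hmem
      exact ⟨t, u, hR, (ihX' t).mpr hXt, (ihY' u).mpr hYu⟩
  | ldiv X Y ihX ihY =>
    intro hC
    exact truthLdiv Φ' hs hC (ihX (Closure.ldivL hC)) (ihY (Closure.ldivR hC))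
  | rdiv Y X ihY ihX =>
    intro hC
    exact truthRdiv Φ' hs hC (ihX (Closure.rdivR hC)) (ihY (Closure.rdivL hC))
  | ildiv X Y ihX ihY =>
    intro hC
    have hXΦ := Closure.ildivL hC
    have hYΦ := Closure.ildivR hC
    have ihX' := ihX hXΦ
    have ihY' := ihY hYΦ
    have hLd := truthLdiv Φ' hs (Closure.ildivDiv hC) ihX' ihY'
    intro a
    constructor
    · intro hsat
      haveI : Finite (CanState {C | Closure Φ' C}) := finiteCanState hs
      haveI : Fintype (CanState {C | Closure Φ' C}) := Fintype.ofFinite _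
      set M := canModel {C | Closure Φ' C} with hM
      set Good : Finset (CanState {C | Closure Φ' C}) → Prop := fun W => ∀ u ∈ W,
        (X.ldiv Y) ∈ u.1.1 ∧ Prov (X.prod (chi s u)) (bigOr (W.toList.map (chi s)))
        with hGood
      set Wst : Finset (CanState {C | Closure Φ' C}) :=
        Finset.univ.filter (fun u => ∃ W, Good W ∧ u ∈ W) with hWst
      have hsubOr : ∀ (W W' : Finset (CanState {C | Closure Φ' C})), W ⊆ W' →
          Prov (bigOr (W.toList.map (chi s))) (bigOr (W'.toList.map (chi s))) := by
        intro W W' hWW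
        apply orSub
        intro F hF
        obtain ⟨v, hv, rfl⟩ := List.mem_map.mp hF
        exact List.mem_map.mpr ⟨v, Finset.mem_toList.mpr (hWW (Finset.mem_toList.mp hv)), rfl⟩
      have hWstGood : Good Wst := by
        intro u hu
        obtain ⟨W, hGW, huW⟩ := (Finset.mem_filter.mp hu).2
        refine ⟨(hGW u huW).1, Prov.cut (hGW u huW).2 (hsubOr W Wst ?_)⟩
        intro v hv
        exact Finset.mem_filter.mpr ⟨Finset.mem_univ _, W, hGW, hv⟩
      set Ust : Finset (CanState {C | Closure Φ' C}) :=
        Finset.univ.filter (fun u => sat M (X.ildiv Y) u) with hUst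
      have hUnion : Good (Wst ∪ Ust) := by
        intro u hu
        rcases Finset.mem_union.mp hu with hu | hu
        · obtain ⟨h1, h2⟩ := hWstGood u hu
          exact ⟨h1, Prov.cut h2 (hsubOr _ _ Finset.subset_union_left)⟩
        · have hsatu : sat M (X.ildiv Y) u := (Finset.mem_filter.mp hu).2
          constructor
          · apply (hLd u).mp
            intro t w hR hXt
            exact hsatu [t] w (by simp) hR
              (by intro x hx; rw [List.mem_singleton.mp hx]; exact hXt)
          · by_contra hnp
            have h : ¬ ∃ γ : List Fm, (∀ Z ∈ γ, Z ∈ u.1.1) ∧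
                Prov (X.prod (bigAnd γ)) (bigOr ((Wst ∪ Ust).toList.map (chi s))) := by
              rintro ⟨γ, hγ, hp⟩
              exact hnp (Prov.cut (prodMonoR (chiAnd hs hγ)) hp)
            obtain ⟨t, z, hR, hXt, hz⟩ := GLdiv hs u X hXΦ _ h
            have hzU : z ∈ Ust := by
              refine Finset.mem_filter.mpr ⟨Finset.mem_univ _, ?_⟩
              intro xs w hne hRl hall
              refine hsatu (t :: xs) w (by simp) ?_ ?_
              · cases xs with
                | nil => exact absurd rfl hne
                | cons y ys => exact ⟨z, hR, hRl⟩
              · intro x hx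
                rcases List.mem_cons.mp hx with h' | h'
                · rw [h']; exact (ihX' t).mpr hXt
                · exact hall x h'
            refine hz ⟨chiL s z, fun Z hZ => (chiL_mem hs).mp hZ, ?_⟩
            exact orElem (List.mem_map.mpr
              ⟨z, Finset.mem_toList.mpr (Finset.mem_union_right _ hzU), rfl⟩)
      have haW : a ∈ Wst := Finset.mem_filter.mpr ⟨Finset.mem_univ _, Wst ∪ Ust, hUnion,
        Finset.mem_union_right _ (Finset.mem_filter.mpr ⟨Finset.mem_univ _, hsat⟩)⟩
      have hD1 : Prov (bigOr (Wst.toList.map (chi s))) (X.ldiv Y) := orElim (by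
        intro F hF
        obtain ⟨v, hv, rfl⟩ := List.mem_map.mp hF
        exact chiElem hs (hWstGood v (Finset.mem_toList.mp hv)).1)
      have hD2 : Prov (bigOr (Wst.toList.map (chi s)))
          (X.ldiv (bigOr (Wst.toList.map (chi s)))) := orElim (by
        intro F hF
        obtain ⟨v, hv, rfl⟩ := List.mem_map.mp hF
        exact Prov.resL1 (hWstGood v (Finset.mem_toList.mp hv)).2)
      have hfin : Prov (chi s a) (X.ildiv Y) :=
        Prov.cut (orElem (List.mem_map.mpr ⟨a, Finset.mem_toList.mpr haW, rfl⟩))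
          (ildivCoind hD1 hD2)
      exact memOfEnt a hC (entOfChi hs hfin)
    · intro hmem
      have key : ∀ xs : List (CanState {C | Closure Φ' C}), xs ≠ [] →
          ∀ a t, (X.ildiv Y) ∈ a.1.1 →
          Rleft (canR {C | Closure Φ' C}) xs a t →
          (∀ x ∈ xs, sat (canModel {C | Closure Φ' C}) X x) →
          sat (canModel {C | Closure Φ' C}) Y t := by
        intro xs
        induction xs with
        | nil => intro hne; exact absurd rfl hne
        | cons x xs ih =>
          intro _ a t hmem hRl hall
          have hXx : X ∈ x.1.1 := (ihX' x).mp (hall x (List.mem_cons_self))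
          cases xs with
          | nil =>
            have hent := hRl X Y hXΦ hYΦ (entOfMem x hXx)
              (entProv (entOfMem a hmem) (Prov.cut (Prov.ildivUnfold X Y) (Prov.andE1 _ _)))
            exact (ihY' t).mpr (memOfEnt t hYΦ hent)
          | cons y ys =>
            obtain ⟨z, hR1, hR2⟩ := hRl
            have hz : (X.ildiv Y) ∈ z.1.1 := memOfEnt z hC
              (hR1 X (X.ildiv Y) hXΦ hC (entOfMem x hXx)
                (entProv (entOfMem a hmem) (Prov.cut (Prov.ildivUnfold X Y) (Prov.andE2 _ _))))
            exact ih (by simp) z t hz hR2 (fun w hw => hall w (List.mem_cons_of_mem _ hw))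
      intro xs t hne hRl hall
      exact key xs hne a t hmem hRl hall
  | irdiv Y X ihY ihX =>
    intro hC
    have hXΦ := Closure.irdivR hC
    have hYΦ := Closure.irdivL hC
    have ihX' := ihX hXΦ
    have ihY' := ihY hYΦ
    have hRd := truthRdiv Φ' hs (Closure.irdivDiv hC) ihX' ihY'
    intro a
    constructor
    · intro hsat
      haveI : Finite (CanState {C | Closure Φ' C}) := finiteCanState hs
      haveI : Fintype (CanState {C | Closure Φ' C}) := Fintype.ofFinite _
      set M := canModel {C | Closure Φ' C} with hM
      set Good : Finset (CanState {C | Closure Φ' C}) → Prop := fun W => ∀ u ∈ W,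
        (Y.rdiv X) ∈ u.1.1 ∧ Prov ((chi s u).prod X) (bigOr (W.toList.map (chi s)))
        with hGood
      set Wst : Finset (CanState {C | Closure Φ' C}) :=
        Finset.univ.filter (fun u => ∃ W, Good W ∧ u ∈ W) with hWst
      have hsubOr : ∀ (W W' : Finset (CanState {C | Closure Φ' C})), W ⊆ W' →
          Prov (bigOr (W.toList.map (chi s))) (bigOr (W'.toList.map (chi s))) := by
        intro W W' hWW
        apply orSub
        intro F hF
        obtain ⟨v, hv, rfl⟩ := List.mem_map.mp hF
        exact List.mem_map.mpr ⟨v, Finset.mem_toList.mpr (hWW (Finset.mem_toList.mp hv)), rfl⟩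
      have hWstGood : Good Wst := by
        intro u hu
        obtain ⟨W, hGW, huW⟩ := (Finset.mem_filter.mp hu).2
        refine ⟨(hGW u huW).1, Prov.cut (hGW u huW).2 (hsubOr W Wst ?_)⟩
        intro v hv
        exact Finset.mem_filter.mpr ⟨Finset.mem_univ _, W, hGW, hv⟩
      set Ust : Finset (CanState {C | Closure Φ' C}) :=
        Finset.univ.filter (fun u => sat M (Y.irdiv X) u) with hUst
      have hUnion : Good (Wst ∪ Ust) := by
        intro u hu
        rcases Finset.mem_union.mp hu with hu | hu
        · obtain ⟨h1, h2⟩ := hWstGood u hu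
          exact ⟨h1, Prov.cut h2 (hsubOr _ _ Finset.subset_union_left)⟩
        · have hsatu : sat M (Y.irdiv X) u := (Finset.mem_filter.mp hu).2
          constructor
          · apply (hRd u).mp
            intro t w hR hXt
            exact hsatu [t] w (by simp) hR
              (by intro x hx; rw [List.mem_singleton.mp hx]; exact hXt)
          · by_contra hnp
            have h : ¬ ∃ γ : List Fm, (∀ Z ∈ γ, Z ∈ u.1.1) ∧
                Prov ((bigAnd γ).prod X) (bigOr ((Wst ∪ Ust).toList.map (chi s))) := by
              rintro ⟨γ, hγ, hp⟩
              exact hnp (Prov.cut (prodMonoL (chiAnd hs hγ)) hp)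
            obtain ⟨t, z, hR, hXt, hz⟩ := GRdiv hs u X hXΦ _ h
            have hzU : z ∈ Ust := by
              refine Finset.mem_filter.mpr ⟨Finset.mem_univ _, ?_⟩
              intro xs w hne hRl hall
              refine hsatu (t :: xs) w (by simp) ?_ ?_
              · cases xs with
                | nil => exact absurd rfl hne
                | cons y ys => exact ⟨z, hR, hRl⟩
              · intro x hx
                rcases List.mem_cons.mp hx with h' | h'
                · rw [h']; exact (ihX' t).mpr hXt
                · exact hall x h'
            refine hz ⟨chiL s z, fun Z hZ => (chiL_mem hs).mp hZ, ?_⟩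
            exact orElem (List.mem_map.mpr
              ⟨z, Finset.mem_toList.mpr (Finset.mem_union_right _ hzU), rfl⟩)
      have haW : a ∈ Wst := Finset.mem_filter.mpr ⟨Finset.mem_univ _, Wst ∪ Ust, hUnion,
        Finset.mem_union_right _ (Finset.mem_filter.mpr ⟨Finset.mem_univ _, hsat⟩)⟩
      have hD1 : Prov (bigOr (Wst.toList.map (chi s))) (Y.rdiv X) := orElim (by
        intro F hF
        obtain ⟨v, hv, rfl⟩ := List.mem_map.mp hF
        exact chiElem hs (hWstGood v (Finset.mem_toList.mp hv)).1)
      have hD2 : Prov (bigOr (Wst.toList.map (chi s)))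
          ((bigOr (Wst.toList.map (chi s))).rdiv X) := orElim (by
        intro F hF
        obtain ⟨v, hv, rfl⟩ := List.mem_map.mp hF
        exact Prov.resR1 (hWstGood v (Finset.mem_toList.mp hv)).2)
      have hfin : Prov (chi s a) (Y.irdiv X) :=
        Prov.cut (orElem (List.mem_map.mpr ⟨a, Finset.mem_toList.mpr haW, rfl⟩))
          (irdivCoind hD1 hD2)
      exact memOfEnt a hC (entOfChi hs hfin)
    · intro hmem
      have key : ∀ xs : List (CanState {C | Closure Φ' C}), xs ≠ [] →
          ∀ a t, (Y.irdiv X) ∈ a.1.1 →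
          Rright (canR {C | Closure Φ' C}) a xs t →
          (∀ x ∈ xs, sat (canModel {C | Closure Φ' C}) X x) →
          sat (canModel {C | Closure Φ' C}) Y t := by
        intro xs
        induction xs with
        | nil => intro hne; exact absurd rfl hne
        | cons x xs ih =>
          intro _ a t hmem hRl hall
          have hXx : X ∈ x.1.1 := (ihX' x).mp (hall x (List.mem_cons_self))
          cases xs with
          | nil =>
            have hent := hRl (Y.irdiv X) Y hC hYΦ (entOfMem a hmem)
              (entProv (entOfMem x hXx)
                (Prov.resL1 (Prov.resR2 (Prov.cut (Prov.irdivUnfold X Y) (Prov.andE1 _ _)))))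
            exact (ihY' t).mpr (memOfEnt t hYΦ hent)
          | cons y ys =>
            obtain ⟨z, hR1, hR2⟩ := hRl
            have hz : (Y.irdiv X) ∈ z.1.1 := memOfEnt z hC
              (hR1 (Y.irdiv X) (Y.irdiv X) hC hC (entOfMem a hmem)
                (entProv (entOfMem x hXx)
                  (Prov.resL1 (Prov.resR2 (Prov.cut (Prov.irdivUnfold X Y) (Prov.andE2 _ _))))))
            exact ih (by simp) z t hz hR2 (fun w hw => hall w (List.mem_cons_of_mem _ hw))
      intro xs t hne hRl hall
      exact key xs hne a t hmem hRl hall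

end Truth
section Finiteness

deriving instance DecidableEq for Fm

def subFm : Fm → Finset Fm
  | .var n => {.var n}
  | .top => {.top}
  | .bot => {.bot}
  | .and A B => insert (Fm.and A B) (subFm A ∪ subFm B)
  | .or A B => insert (Fm.or A B) (subFm A ∪ subFm B)
  | .prod A B => insert (Fm.prod A B) (subFm A ∪ subFm B)
  | .ldiv A B => insert (Fm.ldiv A B) (subFm A ∪ subFm B)
  | .rdiv A B => insert (Fm.rdiv A B) (subFm A ∪ subFm B)
  | .ildiv A B => insert (Fm.ildiv A B) (subFm A ∪ subFm B)
  | .irdiv A B => insert (Fm.irdiv A B) (subFm A ∪ subFm B)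

theorem mem_subFm_self : ∀ A : Fm, A ∈ subFm A := by
  intro A
  cases A <;> simp [subFm]

theorem subFm_trans : ∀ D C : Fm, C ∈ subFm D → subFm C ⊆ subFm D := by
  intro D
  induction D with
  | var n => intro C hC; simp [subFm] at hC; subst hC; exact subset_rfl
  | top => intro C hC; simp [subFm] at hC; subst hC; exact subset_rfl
  | bot => intro C hC; simp [subFm] at hC; subst hC; exact subset_rfl
  | and X Y ihX ihY =>
    intro C hC
    rw [subFm, Finset.mem_insert] at hC
    rcases hC with h | h
    · subst h; exact subset_rfl
    · rcases Finset.mem_union.mp h with h | h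
      · exact (ihX C h).trans (by rw [subFm]; intro z hz; exact Finset.mem_insert_of_mem (Finset.mem_union_left _ hz))
      · exact (ihY C h).trans (by rw [subFm]; intro z hz; exact Finset.mem_insert_of_mem (Finset.mem_union_right _ hz))
  | or X Y ihX ihY =>
    intro C hC
    rw [subFm, Finset.mem_insert] at hC
    rcases hC with h | h
    · subst h; exact subset_rfl
    · rcases Finset.mem_union.mp h with h | h
      · exact (ihX C h).trans (by rw [subFm]; intro z hz; exact Finset.mem_insert_of_mem (Finset.mem_union_left _ hz))
      · exact (ihY C h).trans (by rw [subFm]; intro z hz; exact Finset.mem_insert_of_mem (Finset.mem_union_right _ hz))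
  | prod X Y ihX ihY =>
    intro C hC
    rw [subFm, Finset.mem_insert] at hC
    rcases hC with h | h
    · subst h; exact subset_rfl
    · rcases Finset.mem_union.mp h with h | h
      · exact (ihX C h).trans (by rw [subFm]; intro z hz; exact Finset.mem_insert_of_mem (Finset.mem_union_left _ hz))
      · exact (ihY C h).trans (by rw [subFm]; intro z hz; exact Finset.mem_insert_of_mem (Finset.mem_union_right _ hz))
  | ldiv X Y ihX ihY =>
    intro C hC
    rw [subFm, Finset.mem_insert] at hC
    rcases hC with h | h
    · subst h; exact subset_rfl
    · rcases Finset.mem_union.mp h with h | h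
      · exact (ihX C h).trans (by rw [subFm]; intro z hz; exact Finset.mem_insert_of_mem (Finset.mem_union_left _ hz))
      · exact (ihY C h).trans (by rw [subFm]; intro z hz; exact Finset.mem_insert_of_mem (Finset.mem_union_right _ hz))
  | rdiv X Y ihX ihY =>
    intro C hC
    rw [subFm, Finset.mem_insert] at hC
    rcases hC with h | h
    · subst h; exact subset_rfl
    · rcases Finset.mem_union.mp h with h | h
      · exact (ihX C h).trans (by rw [subFm]; intro z hz; exact Finset.mem_insert_of_mem (Finset.mem_union_left _ hz))
      · exact (ihY C h).trans (by rw [subFm]; intro z hz; exact Finset.mem_insert_of_mem (Finset.mem_union_right _ hz))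
  | ildiv X Y ihX ihY =>
    intro C hC
    rw [subFm, Finset.mem_insert] at hC
    rcases hC with h | h
    · subst h; exact subset_rfl
    · rcases Finset.mem_union.mp h with h | h
      · exact (ihX C h).trans (by rw [subFm]; intro z hz; exact Finset.mem_insert_of_mem (Finset.mem_union_left _ hz))
      · exact (ihY C h).trans (by rw [subFm]; intro z hz; exact Finset.mem_insert_of_mem (Finset.mem_union_right _ hz))
  | irdiv X Y ihX ihY =>
    intro C hC
    rw [subFm, Finset.mem_insert] at hC
    rcases hC with h | h
    · subst h; exact subset_rfl
    · rcases Finset.mem_union.mp h with h | h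
      · exact (ihX C h).trans (by rw [subFm]; intro z hz; exact Finset.mem_insert_of_mem (Finset.mem_union_left _ hz))
      · exact (ihY C h).trans (by rw [subFm]; intro z hz; exact Finset.mem_insert_of_mem (Finset.mem_union_right _ hz))

def extraFm : Fm → Finset Fm
  | .ildiv A B => {Fm.ldiv A B}
  | .irdiv A B => {Fm.rdiv A B}
  | _ => ∅

def clFin (A B : Fm) : Finset Fm :=
  (subFm A ∪ subFm B ∪ {Fm.top, Fm.bot}) ∪
    (subFm A ∪ subFm B ∪ {Fm.top, Fm.bot}).biUnion extraFm

theorem s0_closed {A B : Fm} {C C' : Fm} (h : C ∈ subFm A ∪ subFm B ∪ {Fm.top, Fm.bot})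
    (h' : C' ∈ subFm C) : C' ∈ subFm A ∪ subFm B ∪ {Fm.top, Fm.bot} := by
  rcases Finset.mem_union.mp h with h | h
  · rcases Finset.mem_union.mp h with h | h
    · exact Finset.mem_union_left _ (Finset.mem_union_left _ (subFm_trans A C h h'))
    · exact Finset.mem_union_left _ (Finset.mem_union_right _ (subFm_trans B C h h'))
  · rcases Finset.mem_insert.mp h with h | h
    · subst h; simp [subFm] at h'; subst h'; simp
    · simp only [Finset.mem_singleton] at h; subst h; simp [subFm] at h'; subst h'; simp

theorem sub_mem_clFin {A B : Fm} {C C' : Fm} (h : C ∈ clFin A B)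
    (hnotdiv : ∀ X Y : Fm, C ≠ Fm.ldiv X Y ∧ C ≠ Fm.rdiv X Y) (h' : C' ∈ subFm C) :
    C' ∈ clFin A B := by
  rcases Finset.mem_union.mp h with h | h
  · exact Finset.mem_union_left _ (s0_closed h h')
  · obtain ⟨E, hE, hCE⟩ := Finset.mem_biUnion.mp h
    exfalso
    cases E <;> simp [extraFm] at hCE
    · exact (hnotdiv _ _).1 hCE
    · exact (hnotdiv _ _).2 hCE

theorem closure_mem_clFin (A B : Fm) : ∀ C : Fm, Closure {A, B} C → C ∈ clFin A B := by
  intro C hC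
  induction hC with
  | @base D h =>
    rcases h with h | h
    · rw [show D = A from h]
      exact Finset.mem_union_left _ (Finset.mem_union_left _
        (Finset.mem_union_left _ (mem_subFm_self A)))
    · rw [show D = B from h]
      exact Finset.mem_union_left _ (Finset.mem_union_left _
        (Finset.mem_union_right _ (mem_subFm_self B)))
  | top => exact Finset.mem_union_left _ (by simp)
  | bot => exact Finset.mem_union_left _ (by simp)
  | @andL X Y _ ih =>
    exact sub_mem_clFin ih (by intro _ _; exact ⟨by simp, by simp⟩)
      (by rw [subFm]; exact Finset.mem_insert_of_mem (Finset.mem_union_left _ (mem_subFm_self X)))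
  | @andR X Y _ ih =>
    exact sub_mem_clFin ih (by intro _ _; exact ⟨by simp, by simp⟩)
      (by rw [subFm]; exact Finset.mem_insert_of_mem (Finset.mem_union_right _ (mem_subFm_self Y)))
  | @orL X Y _ ih =>
    exact sub_mem_clFin ih (by intro _ _; exact ⟨by simp, by simp⟩)
      (by rw [subFm]; exact Finset.mem_insert_of_mem (Finset.mem_union_left _ (mem_subFm_self X)))
  | @orR X Y _ ih =>
    exact sub_mem_clFin ih (by intro _ _; exact ⟨by simp, by simp⟩)
      (by rw [subFm]; exact Finset.mem_insert_of_mem (Finset.mem_union_right _ (mem_subFm_self Y)))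
  | @prodL X Y _ ih =>
    exact sub_mem_clFin ih (by intro _ _; exact ⟨by simp, by simp⟩)
      (by rw [subFm]; exact Finset.mem_insert_of_mem (Finset.mem_union_left _ (mem_subFm_self X)))
  | @prodR X Y _ ih =>
    exact sub_mem_clFin ih (by intro _ _; exact ⟨by simp, by simp⟩)
      (by rw [subFm]; exact Finset.mem_insert_of_mem (Finset.mem_union_right _ (mem_subFm_self Y)))
  | @ildivL X Y _ ih =>
    exact sub_mem_clFin ih (by intro _ _; exact ⟨by simp, by simp⟩)
      (by rw [subFm]; exact Finset.mem_insert_of_mem (Finset.mem_union_left _ (mem_subFm_self X)))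
  | @ildivR X Y _ ih =>
    exact sub_mem_clFin ih (by intro _ _; exact ⟨by simp, by simp⟩)
      (by rw [subFm]; exact Finset.mem_insert_of_mem (Finset.mem_union_right _ (mem_subFm_self Y)))
  | @irdivL X Y _ ih =>
    exact sub_mem_clFin ih (by intro _ _; exact ⟨by simp, by simp⟩)
      (by rw [subFm]; exact Finset.mem_insert_of_mem (Finset.mem_union_left _ (mem_subFm_self X)))
  | @irdivR X Y _ ih =>
    exact sub_mem_clFin ih (by intro _ _; exact ⟨by simp, by simp⟩)
      (by rw [subFm]; exact Finset.mem_insert_of_mem (Finset.mem_union_right _ (mem_subFm_self Y)))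
  | @ldivL X Y _ ih =>
    rcases Finset.mem_union.mp ih with h | h
    · exact Finset.mem_union_left _ (s0_closed h
        (by rw [subFm]; exact Finset.mem_insert_of_mem (Finset.mem_union_left _ (mem_subFm_self X))))
    · obtain ⟨E, hE, hCE⟩ := Finset.mem_biUnion.mp h
      cases E <;> simp [extraFm] at hCE
      · obtain ⟨rfl, rfl⟩ := hCE
        exact Finset.mem_union_left _ (s0_closed hE
          (by rw [subFm]; exact Finset.mem_insert_of_mem (Finset.mem_union_left _ (mem_subFm_self X))))
  | @ldivR X Y _ ih =>
    rcases Finset.mem_union.mp ih with h | h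
    · exact Finset.mem_union_left _ (s0_closed h
        (by rw [subFm]; exact Finset.mem_insert_of_mem (Finset.mem_union_right _ (mem_subFm_self Y))))
    · obtain ⟨E, hE, hCE⟩ := Finset.mem_biUnion.mp h
      cases E <;> simp [extraFm] at hCE
      · obtain ⟨rfl, rfl⟩ := hCE
        exact Finset.mem_union_left _ (s0_closed hE
          (by rw [subFm]; exact Finset.mem_insert_of_mem (Finset.mem_union_right _ (mem_subFm_self Y))))
  | @rdivL X Y _ ih =>
    rcases Finset.mem_union.mp ih with h | h
    · exact Finset.mem_union_left _ (s0_closed h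
        (by rw [subFm]; exact Finset.mem_insert_of_mem (Finset.mem_union_left _ (mem_subFm_self X))))
    · obtain ⟨E, hE, hCE⟩ := Finset.mem_biUnion.mp h
      cases E <;> simp [extraFm] at hCE
      · obtain ⟨rfl, rfl⟩ := hCE
        exact Finset.mem_union_left _ (s0_closed hE
          (by rw [subFm]; exact Finset.mem_insert_of_mem (Finset.mem_union_left _ (mem_subFm_self X))))
  | @rdivR X Y _ ih =>
    rcases Finset.mem_union.mp ih with h | h
    · exact Finset.mem_union_left _ (s0_closed h
        (by rw [subFm]; exact Finset.mem_insert_of_mem (Finset.mem_union_right _ (mem_subFm_self Y))))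
    · obtain ⟨E, hE, hCE⟩ := Finset.mem_biUnion.mp h
      cases E <;> simp [extraFm] at hCE
      · obtain ⟨rfl, rfl⟩ := hCE
        exact Finset.mem_union_left _ (s0_closed hE
          (by rw [subFm]; exact Finset.mem_insert_of_mem (Finset.mem_union_right _ (mem_subFm_self Y))))
  | @ildivDiv X Y _ ih =>
    have hE : (Fm.ildiv X Y) ∈ subFm A ∪ subFm B ∪ {Fm.top, Fm.bot} := by
      rcases Finset.mem_union.mp ih with h | h
      · exact h
      · obtain ⟨E, hE, hCE⟩ := Finset.mem_biUnion.mp h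
        exfalso; cases E <;> simp [extraFm] at hCE
    exact Finset.mem_union_right _ (Finset.mem_biUnion.mpr ⟨Fm.ildiv X Y, hE, by simp [extraFm]⟩)
  | @irdivDiv X Y _ ih =>
    have hE : (Fm.irdiv Y X) ∈ subFm A ∪ subFm B ∪ {Fm.top, Fm.bot} := by
      rcases Finset.mem_union.mp ih with h | h
      · exact h
      · obtain ⟨E, hE, hCE⟩ := Finset.mem_biUnion.mp h
        exfalso; cases E <;> simp [extraFm] at hCE
    exact Finset.mem_union_right _ (Finset.mem_biUnion.mpr ⟨Fm.irdiv Y X, hE, by simp [extraFm]⟩)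

end Finiteness

/-- Bounded finite model property: if A ⊢ B is unprovable in IDFNL, it fails in a
Došen model with at most 2^|Φ| states, where Φ is the closure of {A, B}. -/
theorem bounded_fmp (A B : Fm) (h : ¬ Prov A B) :
    ∃ (S : Type) (M : DosenModel S), Nonempty S ∧ Finite S ∧
      Nat.card S ≤ 2 ^ Nat.card {C | Closure ({A, B} : Set Fm) C} ∧
      ¬ valid M A B := by
  classical
  have hΦsub : {C | Closure ({A, B} : Set Fm) C} ⊆ ↑(clFin A B) := by
    intro C hC
    exact closure_mem_clFin A B C hC
  have hfin : Set.Finite {C | Closure ({A, B} : Set Fm) C} :=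
    Set.Finite.subset (clFin A B).finite_toSet hΦsub
  set s : Finset Fm := hfin.toFinset with hsdef
  have hs : ∀ C, C ∈ {C | Closure ({A, B} : Set Fm) C} ↔ C ∈ s := by
    intro C
    exact (Set.Finite.mem_toFinset hfin).symm
  have hAB : IndepPair {A} {B} := by
    rintro ⟨γ, δ, hγ, hδ, hp⟩
    have h1 : Prov A (bigAnd γ) := andIntro fun X hX => by
      rw [Set.mem_singleton_iff.mp (hγ X hX)]; exact Prov.id _
    have h2 : Prov (bigOr δ) B := orElim fun X hX => by
      rw [Set.mem_singleton_iff.mp (hδ X hX)]; exact Prov.id _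
    exact h (Prov.cut h1 (Prov.cut hp h2))
  obtain ⟨Γ', Δ', hΓ, hΔ, hind, hcov⟩ := extendPair hAB s
  have hcov' : ∀ C ∈ {C | Closure ({A, B} : Set Fm) C}, C ∈ Γ' ∨ C ∈ Δ' :=
    fun C hC => hcov C ((hs C).mp hC)
  set a0 : CanState {C | Closure ({A, B} : Set Fm) C} :=
    toState _ Γ' Δ' hind hcov' with ha0
  have hAΦ : Closure ({A, B} : Set Fm) A := Closure.base (Or.inl rfl)
  have hBΦ : Closure ({A, B} : Set Fm) B := Closure.base (Or.inr rfl)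
  have hAmem : A ∈ a0.1.1 := ⟨hΓ rfl, hAΦ⟩
  have hBnot : B ∉ a0.1.1 := fun hB => stateDisjoint a0 hB ⟨hΔ rfl, hBΦ⟩
  haveI hfinS : Finite (CanState {C | Closure ({A, B} : Set Fm) C}) := finiteCanState hs
  refine ⟨CanState {C | Closure ({A, B} : Set Fm) C},
    canModel {C | Closure ({A, B} : Set Fm) C}, ⟨a0⟩, hfinS, ?_, ?_⟩
  · -- cardinality bound
    have hinj : Function.Injective
        (fun (a : CanState {C | Closure ({A, B} : Set Fm) C}) (x : {C // C ∈ s}) =>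
          (↑x ∈ a.1.1 : Prop)) := by
      intro a b hab
      apply state_eq_of_fst
      ext C
      constructor
      · intro hC
        have hCs : C ∈ s := (hs C).mp (stateSub1 a hC)
        have h2 : (C ∈ a.1.1) = (C ∈ b.1.1) := congrFun hab ⟨C, hCs⟩
        exact h2 ▸ hC
      · intro hC
        have hCs : C ∈ s := (hs C).mp (stateSub1 b hC)
        have h2 : (C ∈ a.1.1) = (C ∈ b.1.1) := congrFun hab ⟨C, hCs⟩
        exact h2.symm ▸ hC
    have hle : Nat.card (CanState {C | Closure ({A, B} : Set Fm) C}) ≤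
        Nat.card ({C // C ∈ s} → Prop) := Nat.card_le_card_of_injective _ hinj
    have hcard1 : Nat.card ({C // C ∈ s} → Prop) = 2 ^ s.card := by
      rw [Nat.card_eq_fintype_card, Fintype.card_fun]
      simp
    have hcard2 : Nat.card {C | Closure ({A, B} : Set Fm) C} = s.card := by
      rw [Nat.card_eq_card_finite_toFinset hfin]
    rw [hcard2]
    exact hle.trans (le_of_eq hcard1)
  · intro hval
    have hsatA : sat (canModel {C | Closure ({A, B} : Set Fm) C}) A a0 :=
      (truthLemma ({A, B} : Set Fm) hs A hAΦ a0).mpr hAmem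
    have hsatB := hval a0 hsatA
    exact hBnot ((truthLemma ({A, B} : Set Fm) hs B hBΦ a0).mp hsatB)
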